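/- Let g = [[α,X,Y],[E,A,B],[F,0,D]] be a (2l+1)×(2l+1) matrix over 𝔽_q (blocks of sizes 1, l, l, with the lower-middle l×l block equal to 0) satisfying ᵀg·β·g = β with β = [[2,0,0],[0,0,I_l],[0,I_l,0]]. Then X = 0 and ᵀA·D = I_l (so D = ᵀA⁻¹). -/

import Mathlib

open Matrix

/-- for `g = [[α,X,Y],[E,A,B],[F,0,D]] ∈ O(2l+1,q)` one has
`X = 0` and `ᵀA·D = I`. -/
theorem stmt_13 (K : Type*) [Field K] [Fintype K] (hchar : ringChar K ≠ 2)
    (l : ℕ) (hl : 2 ≤ l) (α : K)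
    (X Y : Matrix (Fin 1) (Fin l) K)
    (E Fm : Matrix (Fin l) (Fin 1) K)
    (A B D : Matrix (Fin l) (Fin l) K)
    (β g : Matrix (Fin 1 ⊕ (Fin l ⊕ Fin l)) (Fin 1 ⊕ (Fin l ⊕ Fin l)) K)
    (hβ : β = fromBlocks (Matrix.diagonal fun _ => (2 : K)) 0 0 (fromBlocks 0 1 1 0))
    (hg : g = fromBlocks (Matrix.diagonal fun _ => α) (fromCols X Y)
      (fromRows E Fm) (fromBlocks A B 0 D))
    (horth : gᵀ * β * g = β) :
    X = 0 ∧ Aᵀ * D = 1 := by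
  subst hβ hg
  rw [fromBlocks_transpose, fromBlocks_multiply, fromBlocks_multiply] at horth
  have h22 := congrArg Matrix.toBlocks₂₂ horth
  simp only [toBlocks_fromBlocks₂₂, Matrix.mul_zero, Matrix.zero_mul, add_zero, zero_add,
    fromBlocks_transpose, transpose_fromCols, fromBlocks_multiply, mul_fromCols,
    fromRows_mul, fromCols_fromRows_eq_fromBlocks, transpose_zero, transpose_one,
    Matrix.mul_one, Matrix.one_mul, fromBlocks_add] at h22
  have two_ne : (2 : K) ≠ 0 := Ring.two_ne_zero hchar
  have h11 := congrArg Matrix.toBlocks₁₁ h22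
  have h12 := congrArg Matrix.toBlocks₁₂ h22
  simp only [toBlocks_fromBlocks₁₁, toBlocks_fromBlocks₁₂, add_zero] at h11 h12
  -- h11 : Xᵀ * diagonal 2 * X = 0
  have hX : X = 0 := by
    ext i j
    have := congrFun (congrFun h11 j) j
    simp [Matrix.mul_apply, Matrix.diagonal, Fin.sum_univ_succ, mul_comm, two_ne] at this
    simpa [Subsingleton.elim i 0] using this
  subst hX
  simp only [transpose_zero, Matrix.zero_mul, zero_add] at h12
  exact ⟨rfl, h12⟩
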